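/- arXiv:2402.08435 — 2 statements merged into one kernel-verified Lean document; each statement's English description precedes it below -/
import Mathlib

section
/- For every i in ℤ, A_i A_i† = I − Σ_{k>i} A_k† A_k, where the series converges in the strong operator topology on the weakly monotone Fock space. -/
open scoped ComplexOrder

/-- Index set for the orthonormal basis of the weakly monotone Fock space over `ℓ²(ℤ)`:
decreasing (finite) lists of integers; the empty list corresponds to the vacuum. -/
def WMIdx : Type := {l : List ℤ // l.Chain' (· ≥ ·)}

/-- `i` may be created on top of the tensor indexed by `l`. -/
def WMIdx.ok (i : ℤ) (l : WMIdx) : Prop := ∀ j ∈ l.1.head?, i ≥ j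

def WMIdx.cons (i : ℤ) (l : WMIdx) (h : WMIdx.ok i l) : WMIdx :=
  ⟨i :: l.1, List.isChain_cons.mpr ⟨h, l.2⟩⟩

def WMIdx.vac : WMIdx := ⟨[], List.isChain_nil⟩

section Aux
attribute [local instance] Classical.propDecidable
set_option linter.unusedSectionVars false

variable {H : Type} [NormedAddCommGroup H] [InnerProductSpace ℂ H] [CompleteSpace H]
  (b : HilbertBasis WMIdx ℂ H) (C : ℤ → H →L[ℂ] H)
  (hC : ∀ i l (h : WMIdx.ok i l), C i (b l) = b (WMIdx.cons i l h))
  (hC0 : ∀ i l, ¬ WMIdx.ok i l → C i (b l) = 0)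

lemma wm_ext {u v : H} (h : ∀ j, (inner ℂ (b j) u : ℂ) = inner ℂ (b j) v) : u = v := by
  apply b.repr.injective
  apply lp.ext
  funext j
  rw [b.repr_apply_apply, b.repr_apply_apply]
  exact h j

lemma wm_bb (j l : WMIdx) : (inner ℂ (b j) (b l) : ℂ) = if j = l then 1 else 0 :=
  orthonormal_iff_ite.mp b.orthonormal j l

include hC hC0 in
lemma wm_adj_cons (k : ℤ) (l : WMIdx) (h : WMIdx.ok k l) :
    ContinuousLinearMap.adjoint (C k) (b (WMIdx.cons k l h)) = b l := by
  apply wm_ext b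
  intro j
  rw [ContinuousLinearMap.adjoint_inner_right]
  by_cases hj : WMIdx.ok k j
  · rw [hC k j hj, wm_bb, wm_bb]
    congr 1
    simp only [eq_iff_iff]
    constructor
    · intro he
      apply Subtype.ext
      have := congrArg Subtype.val he
      simpa [WMIdx.cons] using this
    · rintro rfl; rfl
  · rw [hC0 k j hj, wm_bb]
    rw [if_neg (by rintro rfl; exact hj h)]
    simp

include hC hC0 in
lemma wm_adj_zero (k : ℤ) (n : WMIdx) (hn : n.1.head? ≠ some k) :
    ContinuousLinearMap.adjoint (C k) (b n) = 0 := by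
  apply wm_ext b
  intro j
  rw [ContinuousLinearMap.adjoint_inner_right, inner_zero_right]
  by_cases hj : WMIdx.ok k j
  · rw [hC k j hj, wm_bb]
    rw [if_neg]
    rintro rfl
    exact hn rfl
  · rw [hC0 k j hj, inner_zero_left]

include hC hC0 in
lemma wm_T (k : ℤ) (n : WMIdx) :
    C k (ContinuousLinearMap.adjoint (C k) (b n)) =
      if n.1.head? = some k then b n else 0 := by
  by_cases h : n.1.head? = some k
  · rw [if_pos h]
    obtain ⟨a, t, ht⟩ : ∃ a t, n.1 = a :: t := by
      cases hn : n.1 with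
      | nil => rw [hn] at h; simp at h
      | cons a t => exact ⟨a, t, rfl⟩
    have ha : a = k := by rw [ht] at h; simpa using h
    subst ha
    have hch : (a :: t).Chain' (· ≥ ·) := ht ▸ n.2
    obtain ⟨hok, (hct : t.Chain' (· ≥ ·))⟩ := List.isChain_cons.mp hch
    have hok' : WMIdx.ok a ⟨t, hct⟩ := hok
    have hn' : n = WMIdx.cons a ⟨t, hct⟩ hok' := Subtype.ext ht
    rw [hn', wm_adj_cons b C hC hC0 a ⟨t, hct⟩ hok', hC a ⟨t, hct⟩ hok']
  · rw [if_neg h, wm_adj_zero b C hC hC0 k n h, map_zero]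

include hC hC0 in
lemma wm_P (i : ℤ) (m : WMIdx) :
    ContinuousLinearMap.adjoint (C i) (C i (b m)) =
      if WMIdx.ok i m then b m else 0 := by
  by_cases h : WMIdx.ok i m
  · rw [if_pos h, hC i m h, wm_adj_cons b C hC hC0]
  · rw [if_neg h, hC0 i m h, map_zero]

lemma wm_headI {l : List ℤ} {k : ℤ} (h : l.head? = some k) : l.headI = k := by
  cases l <;> simp_all

lemma wm_head?_headI {l : List ℤ} {k : ℤ} (h : l.head? = some k) :
    l.head? = some l.headI := by
  cases l <;> simp_all

lemma wm_not_ok_iff (i : ℤ) (m : WMIdx) :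
    ¬ WMIdx.ok i m ↔ ∃ k, m.1.head? = some k ∧ i < k := by
  simp [WMIdx.ok, not_le, Option.mem_def]

end Aux

set_option maxHeartbeats 1000000 in
/-- `A_i A_i† = I − Σ_{k>i} A_k† A_k`, the series converging in the strong
operator topology: for every vector `x`, the family `(A_k† A_k x)_{k>i}` is summable with
sum `x − A_i A_i† x`. -/
theorem wm_range_projection_series {H : Type} [NormedAddCommGroup H] [InnerProductSpace ℂ H] [CompleteSpace H]
    (b : HilbertBasis WMIdx ℂ H) (C : ℤ → H →L[ℂ] H)
    (hC : ∀ i l (h : WMIdx.ok i l), C i (b l) = b (WMIdx.cons i l h))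
    (hC0 : ∀ i l, ¬ WMIdx.ok i l → C i (b l) = 0)
    (i : ℤ) (x : H) :
    HasSum (fun k : {k : ℤ // i < k} => (C k.1) ((ContinuousLinearMap.adjoint (C k.1)) x))
      (x - (ContinuousLinearMap.adjoint (C i)) ((C i) x)) := by
  classical
  set c : WMIdx → ℂ := fun m => b.repr x m with hc
  have hx : HasSum (fun m => c m • b m) x := b.hasSum_repr x
  set S : H := x - (ContinuousLinearMap.adjoint (C i)) ((C i) x) with hSdef
  -- the "complement" sum
  have hg : HasSum (fun m : WMIdx => if WMIdx.ok i m then 0 else c m • b m) S := by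
    have h1 := hx.sub
      (((ContinuousLinearMap.adjoint (C i)).comp (C i)).hasSum hx)
    have hfun : (fun m : WMIdx => if WMIdx.ok i m then 0 else c m • b m) =
        fun m => c m • b m - ((ContinuousLinearMap.adjoint (C i)).comp (C i)) (c m • b m) := by
      funext m
      simp only [ContinuousLinearMap.comp_apply, map_smul, wm_P b C hC hC0]
      split_ifs with h <;> simp
    rw [hfun]
    simpa using h1
  -- per-k sums
  have hT : ∀ k : ℤ, HasSum
      (fun m : WMIdx => if m.1.head? = some k then c m • b m else 0)
      (C k ((ContinuousLinearMap.adjoint (C k)) x)) := by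
    intro k
    have h1 := ((C k).comp (ContinuousLinearMap.adjoint (C k))).hasSum hx
    have hfun : (fun m : WMIdx => if m.1.head? = some k then c m • b m else 0) =
        fun m => ((C k).comp (ContinuousLinearMap.adjoint (C k))) (c m • b m) := by
      funext m
      simp only [ContinuousLinearMap.comp_apply, map_smul, wm_T b C hC hC0]
      split_ifs with h <;> simp
    rw [hfun]
    simpa using h1
  -- restrict to subtypes
  have hg' : HasSum (fun m : {m : WMIdx // ¬ WMIdx.ok i m} => c m.1 • b m.1) S := by
    have hsupp : Function.support (fun m : WMIdx => if WMIdx.ok i m then 0 else c m • b m)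
        ⊆ {m : WMIdx | ¬ WMIdx.ok i m} := by
      intro m hm
      simp only [Function.mem_support] at hm
      intro hok
      exact hm (if_pos hok)
    have hs := (hasSum_subtype_iff_of_support_subset hsupp).2 hg
    have heq : ((fun m : WMIdx => if WMIdx.ok i m then 0 else c m • b m) ∘
        (Subtype.val : {m : WMIdx // ¬ WMIdx.ok i m} → WMIdx)) =
        (fun m : {m : WMIdx // ¬ WMIdx.ok i m} => c m.1 • b m.1) := by
      funext m
      simp only [Function.comp_apply, if_neg m.2]
    exact heq ▸ hs
  have hT' : ∀ k : ℤ, HasSum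
      (fun m : {m : WMIdx // m.1.head? = some k} => c m.1 • b m.1)
      (C k ((ContinuousLinearMap.adjoint (C k)) x)) := by
    intro k
    have hsupp : Function.support (fun m : WMIdx => if m.1.head? = some k then c m • b m else 0)
        ⊆ {m : WMIdx | m.1.head? = some k} := by
      intro m hm
      simp only [Function.mem_support] at hm
      by_contra hok
      simp only [Set.mem_setOf_eq] at hok
      exact hm (if_neg hok)
    have hs := (hasSum_subtype_iff_of_support_subset hsupp).2 (hT k)
    have heq : ((fun m : WMIdx => if m.1.head? = some k then c m • b m else 0) ∘
        (Subtype.val : {m : WMIdx // m.1.head? = some k} → WMIdx)) =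
        (fun m : {m : WMIdx // m.1.head? = some k} => c m.1 • b m.1) := by
      funext m
      simp only [Function.comp_apply, if_pos m.2]
    exact heq ▸ hs
  -- the equivalence between the sigma type and the complement
  let E : (Σ k : {k : ℤ // i < k}, {m : WMIdx // m.1.head? = some k.1}) ≃
      {m : WMIdx // ¬ WMIdx.ok i m} :=
  { toFun := fun p => ⟨p.2.1, by
      rw [wm_not_ok_iff]
      exact ⟨p.1.1, p.2.2, p.1.2⟩⟩
    invFun := fun m => ⟨⟨m.1.1.headI, by
        obtain ⟨k, hk, hik⟩ := (wm_not_ok_iff i m.1).mp m.2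
        rw [wm_headI hk]
        exact hik⟩,
      ⟨m.1, by
        obtain ⟨k, hk, hik⟩ := (wm_not_ok_iff i m.1).mp m.2
        exact wm_head?_headI hk⟩⟩
    left_inv := by
      rintro ⟨⟨k, hk⟩, ⟨m, hm⟩⟩
      have hh : m.1.headI = k := wm_headI hm
      subst hh
      rfl
    right_inv := fun m => rfl }
  have hsig : HasSum
      (fun p : (Σ k : {k : ℤ // i < k}, {m : WMIdx // m.1.head? = some k.1}) =>
        c p.2.1 • b p.2.1) S :=
    E.hasSum_iff.mpr hg'
  exact hsig.sigma fun k => hT' k.1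
end

section
/- In any *-algebra quotient of the weakly monotone *-algebra in which every ρ(A_i²) = 0, one has ρ(A_i) = 0 for all i ∈ ℤ; hence the two-sided ideal of the weakly monotone *-algebra W₀ generated by {A_i² : i ∈ ℤ} equals W₀. -/
open scoped ComplexOrder

instance : DecidableEq WMIdx := fun l m => decidable_of_iff (l.1 = m.1) Subtype.ext_iff.symm

section Aux

variable {H : Type} [NormedAddCommGroup H] [InnerProductSpace ℂ H] [CompleteSpace H]
  (b : HilbertBasis WMIdx ℂ H) (C : ℤ → H →L[ℂ] H)
  (hC : ∀ i l (h : WMIdx.ok i l), C i (b l) = b (WMIdx.cons i l h))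
  (hC0 : ∀ i l, ¬ WMIdx.ok i l → C i (b l) = 0)

local notation "⟪" x ", " y "⟫" => @inner ℂ H _ x y

lemma wm_inner_basis (l m : WMIdx) : ⟪b l, b m⟫ = if l = m then 1 else 0 :=
  orthonormal_iff_ite.mp b.orthonormal l m

lemma wm_cons_eq_iff (i : ℤ) (l m : WMIdx) (hl : WMIdx.ok i l) (hm : WMIdx.ok i m) :
    WMIdx.cons i l hl = WMIdx.cons i m hm ↔ l = m := by
  constructor
  · intro h
    have h2 : (WMIdx.cons i l hl).1 = (WMIdx.cons i m hm).1 := by rw [h]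
    simp only [WMIdx.cons, List.cons.injEq] at h2
    exact Subtype.ext h2.2
  · rintro rfl; rfl

include hC hC0 in
lemma wm_adjoint_cons (i : ℤ) (l : WMIdx) (h : WMIdx.ok i l) :
    ContinuousLinearMap.adjoint (C i) (b (WMIdx.cons i l h)) = b l := by
  apply b.repr.injective
  ext m
  rw [b.repr_apply_apply, b.repr_apply_apply, ContinuousLinearMap.adjoint_inner_right]
  by_cases hm : WMIdx.ok i m
  · rw [hC i m hm, wm_inner_basis, wm_inner_basis]
    by_cases hml : m = l
    · subst hml
      simp
    · have : WMIdx.cons i m hm ≠ WMIdx.cons i l h :=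
        fun e => hml ((wm_cons_eq_iff i m l hm h).mp e)
      simp [this, hml]
  · rw [hC0 i m hm, inner_zero_left, wm_inner_basis]
    have : m ≠ l := fun e => hm (e ▸ h)
    simp [this]

include hC hC0 in
lemma wm_adjoint_ne (i : ℤ) (l : WMIdx) (hl : l.1.head? ≠ some i) :
    ContinuousLinearMap.adjoint (C i) (b l) = 0 := by
  apply b.repr.injective
  ext m
  rw [b.repr_apply_apply, b.repr_apply_apply, ContinuousLinearMap.adjoint_inner_right]
  rw [inner_zero_right]
  by_cases hm : WMIdx.ok i m
  · rw [hC i m hm, wm_inner_basis]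
    have hne : WMIdx.cons i m hm ≠ l := by
      intro e
      apply hl
      rw [← e]
      rfl
    simp [hne]
  · rw [hC0 i m hm, inner_zero_left]

include hC hC0 in
lemma wm_key_identity (i : ℤ) :
    ContinuousLinearMap.adjoint (C i) =
      ContinuousLinearMap.adjoint (C i) * ContinuousLinearMap.adjoint (C i) * C i := by
  have hdense : Dense (Submodule.span ℂ (Set.range b) : Set H) :=
    Submodule.dense_iff_topologicalClosure_eq_top.mpr b.dense_span
  refine (ContinuousLinearMap.ext_on hdense ?_).symm
  rintro _ ⟨l, rfl⟩
  simp only [ContinuousLinearMap.mul_apply]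
  by_cases h : WMIdx.ok i l
  · rw [hC i l h, wm_adjoint_cons b C hC hC0 i l h]
  · rw [hC0 i l h, map_zero, map_zero]
    refine (wm_adjoint_ne b C hC hC0 i l ?_).symm
    simp only [WMIdx.ok] at h
    push_neg at h
    obtain ⟨j, hj, hij⟩ := h
    intro he
    rw [he] at hj
    simp only [Option.mem_def, Option.some.injEq] at hj
    omega

end Aux

set_option maxHeartbeats 4000000

/-- if `ρ` is a *-algebra homomorphism from the weakly monotone *-algebra
`W₀` (generated by the annihilators `A_i = (C i)^*`) killing every `A_i²`, then it kills
every `A_i`; consequently, every two-sided ideal of `W₀` containing all `A_i²` is all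
of `W₀`. -/
theorem wm_star_algebra_ideal_of_squares {H : Type} [NormedAddCommGroup H] [InnerProductSpace ℂ H] [CompleteSpace H]
    (b : HilbertBasis WMIdx ℂ H) (C : ℤ → H →L[ℂ] H)
    (hC : ∀ i l (h : WMIdx.ok i l), C i (b l) = b (WMIdx.cons i l h))
    (hC0 : ∀ i l, ¬ WMIdx.ok i l → C i (b l) = 0)
    (W₀ : NonUnitalStarSubalgebra ℂ (H →L[ℂ] H))
    (hW₀ : W₀ = NonUnitalStarAlgebra.adjoin ℂ
        (Set.range fun i : ℤ => ContinuousLinearMap.adjoint (C i))) :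
    (∀ (B : Type) [NonUnitalRing B] [StarRing B] [Module ℂ B]
      (ρ : W₀ →⋆ₙₐ[ℂ] B),
      (∀ (i : ℤ)
        (h : (ContinuousLinearMap.adjoint (C i) * ContinuousLinearMap.adjoint (C i) :
            H →L[ℂ] H) ∈ W₀),
        ρ ⟨_, h⟩ = 0) →
      ∀ (i : ℤ) (h : ContinuousLinearMap.adjoint (C i) ∈ W₀), ρ ⟨_, h⟩ = 0) ∧
    (∀ (I : TwoSidedIdeal W₀),
      (∀ (i : ℤ)
        (h : (ContinuousLinearMap.adjoint (C i) * ContinuousLinearMap.adjoint (C i) :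
            H →L[ℂ] H) ∈ W₀),
        (⟨_, h⟩ : W₀) ∈ I) →
      ∀ x : W₀, x ∈ I) := by
  have hmem_of : ∀ {y : H →L[ℂ] H}, y ∈ NonUnitalStarAlgebra.adjoin ℂ
      (Set.range fun i : ℤ => ContinuousLinearMap.adjoint (C i)) → y ∈ W₀ := by
    rw [hW₀]; exact fun h => h
  have hmem_to : ∀ {y : H →L[ℂ] H}, y ∈ W₀ → y ∈ NonUnitalStarAlgebra.adjoin ℂ
      (Set.range fun i : ℤ => ContinuousLinearMap.adjoint (C i)) := by
    rw [hW₀]; exact fun h => h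
  set A : ℤ → H →L[ℂ] H := fun i => ContinuousLinearMap.adjoint (C i) with hA
  have hkey : ∀ i, A i = A i * A i * C i := wm_key_identity b C hC hC0
  have hstarA : ∀ i, star (A i) = C i := fun i => ContinuousLinearMap.adjoint_adjoint (C i)
  have hAmem : ∀ i, A i ∈ W₀ := fun i =>
    hmem_of (NonUnitalStarAlgebra.subset_adjoin ℂ _ ⟨i, rfl⟩)
  have hCmem : ∀ i, C i ∈ W₀ := fun i => hstarA i ▸ star_mem (hAmem i)
  have hsqmem : ∀ i, A i * A i ∈ W₀ := fun i => mul_mem (hAmem i) (hAmem i)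
  have hkeyC : ∀ i, C i = A i * (C i * C i) := by
    intro i
    have h1 := congrArg star (hkey i)
    simpa only [star_mul, hstarA, ContinuousLinearMap.star_eq_adjoint,
      ContinuousLinearMap.adjoint_adjoint, mul_assoc] using h1
  constructor
  · intro B _ _ _ ρ hsq i h
    have e : (⟨A i, h⟩ : W₀) = ⟨A i * A i, hsqmem i⟩ * ⟨C i, hCmem i⟩ :=
      Subtype.ext (hkey i)
    rw [e, map_mul, hsq i (hsqmem i), zero_mul]
  · intro I hsq
    have hAI : ∀ (i : ℤ) (h : A i ∈ W₀) (c : ℂ), c • (⟨A i, h⟩ : W₀) ∈ I := by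
      intro i h c
      have e : c • (⟨A i, h⟩ : W₀) =
          (⟨A i * A i, hsqmem i⟩ : W₀) * (c • ⟨C i, hCmem i⟩) := by
        apply Subtype.ext
        show c • A i = (A i * A i) * (c • C i)
        rw [mul_smul_comm, ← hkey i]
      rw [e]
      exact I.mul_mem_right _ _ (hsq i (hsqmem i))
    have hCI : ∀ (i : ℤ) (h : C i ∈ W₀) (c : ℂ), c • (⟨C i, h⟩ : W₀) ∈ I := by
      intro i h c
      have e : c • (⟨C i, h⟩ : W₀) =
          (⟨A i, hAmem i⟩ : W₀) * (c • ⟨C i * C i, mul_mem (hCmem i) (hCmem i)⟩) := by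
        apply Subtype.ext
        show c • C i = A i * (c • (C i * C i))
        rw [mul_smul_comm, ← hkeyC i]
      rw [e]
      exact I.mul_mem_right _ _ (by simpa using hAI i (hAmem i) 1)
    have main : ∀ (y : H →L[ℂ] H) (hy : y ∈ NonUnitalStarAlgebra.adjoin ℂ
        (Set.range fun i : ℤ => ContinuousLinearMap.adjoint (C i))),
        (∀ c : ℂ, c • (⟨y, hmem_of hy⟩ : W₀) ∈ I) ∧
          (∀ c : ℂ, c • (⟨star y, star_mem (hmem_of hy)⟩ : W₀) ∈ I) := by
      intro y hy
      induction hy using NonUnitalStarAlgebra.adjoin_induction with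
      | mem z hz =>
        obtain ⟨i, rfl⟩ := hz
        constructor
        · exact hAI i _
        · intro c
          have e2 : ∀ (h : star (A i) ∈ W₀), (⟨star (A i), h⟩ : W₀) = ⟨C i, hCmem i⟩ :=
            fun h => Subtype.ext (hstarA i)
          rw [e2]
          exact hCI i _ c
      | add y z hy hz ihy ihz =>
        constructor
        · intro c
          have e : c • (⟨y + z, hmem_of (add_mem hy hz)⟩ : W₀) =
              c • (⟨y, hmem_of hy⟩ : W₀) + c • (⟨z, hmem_of hz⟩ : W₀) := by
            apply Subtype.ext
            show c • (y + z) = c • y + c • z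
            rw [smul_add]
          rw [e]
          exact I.add_mem (ihy.1 c) (ihz.1 c)
        · intro c
          have e : c • (⟨star (y + z), star_mem (hmem_of (add_mem hy hz))⟩ : W₀) =
              c • (⟨star y, star_mem (hmem_of hy)⟩ : W₀) +
                c • (⟨star z, star_mem (hmem_of hz)⟩ : W₀) := by
            apply Subtype.ext
            show c • star (y + z) = c • star y + c • star z
            rw [star_add, smul_add]
          rw [e]
          exact I.add_mem (ihy.2 c) (ihz.2 c)
      | zero =>
        have e0 : ∀ (h : (0 : H →L[ℂ] H) ∈ W₀) (c : ℂ), c • (⟨(0 : H →L[ℂ] H), h⟩ : W₀) = 0 :=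
          fun h c => Subtype.ext (by show c • (0 : H →L[ℂ] H) = 0; rw [smul_zero])
        constructor
        · intro c
          rw [e0]
          exact I.zero_mem
        · intro c
          have e : ∀ (h : star (0 : H →L[ℂ] H) ∈ W₀), (⟨star (0 : H →L[ℂ] H), h⟩ : W₀) =
              ⟨(0 : H →L[ℂ] H), zero_mem W₀⟩ := fun h => Subtype.ext (star_zero _)
          rw [e, e0]
          exact I.zero_mem
      | mul y z hy hz ihy ihz =>
        constructor
        · intro c
          have e : c • (⟨y * z, hmem_of (mul_mem hy hz)⟩ : W₀) =
              (c • (⟨y, hmem_of hy⟩ : W₀)) * ⟨z, hmem_of hz⟩ := by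
            apply Subtype.ext
            show c • (y * z) = (c • y) * z
            rw [smul_mul_assoc]
          rw [e]
          exact I.mul_mem_right _ _ (ihy.1 c)
        · intro c
          have e : c • (⟨star (y * z), star_mem (hmem_of (mul_mem hy hz))⟩ : W₀) =
              (⟨star z, star_mem (hmem_of hz)⟩ : W₀) *
                (c • (⟨star y, star_mem (hmem_of hy)⟩ : W₀)) := by
            apply Subtype.ext
            show c • star (y * z) = star z * (c • star y)
            rw [star_mul, mul_smul_comm]
          rw [e]
          exact I.mul_mem_left _ _ (ihy.2 c)
      | smul r y hy ihy =>
        constructor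
        · intro c
          have e : c • (⟨r • y, hmem_of (SMulMemClass.smul_mem r hy)⟩ : W₀) =
              (c * r) • (⟨y, hmem_of hy⟩ : W₀) := by
            apply Subtype.ext
            show c • (r • y) = (c * r) • y
            rw [mul_smul]
          rw [e]
          exact ihy.1 (c * r)
        · intro c
          have e : c • (⟨star (r • y), star_mem (hmem_of (SMulMemClass.smul_mem r hy))⟩ : W₀) =
              (c * star r) • (⟨star y, star_mem (hmem_of hy)⟩ : W₀) := by
            apply Subtype.ext
            show c • star (r • y) = (c * star r) • star y
            rw [star_smul, mul_smul]
          rw [e]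
          exact ihy.2 (c * star r)
      | star y hy ihy =>
        constructor
        · exact ihy.2
        · intro c
          have e : ∀ (h : star (star y) ∈ W₀), (⟨star (star y), h⟩ : W₀) =
              ⟨y, hmem_of hy⟩ := fun h => Subtype.ext (star_star y)
          rw [e]
          exact ihy.1 c
    intro x
    obtain ⟨x, hx⟩ := x
    simpa using (main x (hmem_to hx)).1 1
end
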